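/- Let p be an odd prime. In SL₂(F_p), the matrix a = [[1,1],[0,1]] is conjugate to a^m = [[1,m],[0,1]] whichever m is a nonzero quadratic residue mod p. Consequently any unitary representation ρ of SL₂(F_p) in dimension d < (p−1)/2 satisfies ρ(a) = 1. -/

import Mathlib

open Matrix Polynomial

/-- The upper unitriangular matrix `[[1, t], [0, 1]]` as an element of `SL₂`. -/
def upperUni (p : ℕ) [Fact p.Prime] (t : ZMod p) :
    Matrix.SpecialLinearGroup (Fin 2) (ZMod p) :=
  ⟨!![1, t; 0, 1], by simp [Matrix.det_fin_two_of]⟩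

section Aux

variable (p : ℕ) [Fact p.Prime]

lemma upperUni_mul (s t : ZMod p) :
    upperUni p s * upperUni p t = upperUni p (s + t) := by
  apply Subtype.ext
  show (!![1, s; 0, 1] : Matrix (Fin 2) (Fin 2) (ZMod p)) * !![1, t; 0, 1] = _
  rw [Matrix.mul_fin_two]
  congr 1 <;> ring

lemma upperUni_zero : upperUni p 0 = 1 := by
  apply Subtype.ext
  show (!![1, (0 : ZMod p); 0, 1]) = 1
  ext i j; fin_cases i <;> fin_cases j <;> simp [upperUni]

lemma upperUni_pow (t : ZMod p) (n : ℕ) :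
    upperUni p t ^ n = upperUni p (n * t) := by
  induction n with
  | zero => simpa using (upperUni_zero p).symm
  | succ n ih =>
      rw [pow_succ, ih, upperUni_mul]
      congr 1
      push_cast
      ring

lemma upperUni_isConj (m : ZMod p) (hm : m ≠ 0) (hsq : IsSquare m) :
    IsConj (upperUni p 1) (upperUni p m) := by
  obtain ⟨t, rfl⟩ := hsq
  have ht : t ≠ 0 := fun h => hm (by simp [h])
  refine isConj_iff.mpr ⟨⟨!![t, 0; 0, t⁻¹], by
    simp [Matrix.det_fin_two_of, mul_inv_cancel₀ ht]⟩, ?_⟩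
  erw [mul_inv_eq_iff_eq_mul]
  apply Subtype.ext
  show (!![t, 0; 0, t⁻¹] : Matrix (Fin 2) (Fin 2) (ZMod p)) * !![1, 1; 0, 1]
      = !![1, t * t; 0, 1] * !![t, 0; 0, t⁻¹]
  rw [Matrix.mul_fin_two, Matrix.mul_fin_two]
  have h : t * t * t⁻¹ = t := by field_simp
  congr 1 <;> simp [h]

end Aux

lemma mem_spectrum_iff_isRoot' {d : ℕ} (A : Matrix (Fin d) (Fin d) ℂ) (μ : ℂ) :
    μ ∈ spectrum ℂ A ↔ A.charpoly.IsRoot μ := by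
  have h : A.charpoly.eval μ = (Matrix.scalar (Fin d) μ - A).det := by
    rw [Matrix.charpoly, _root_.eval_det, matPolyEquiv_charmatrix]
    simp
  have halg : algebraMap ℂ (Matrix (Fin d) (Fin d) ℂ) μ = Matrix.scalar (Fin d) μ := by
    simp [Matrix.algebraMap_eq_diagonal, Matrix.scalar]
  rw [spectrum.mem_iff, Polynomial.IsRoot, h, halg,
    Matrix.isUnit_iff_isUnit_det, isUnit_iff_ne_zero, not_not]

lemma pow_mem_spectrum_pow' {d : ℕ} (U : Matrix (Fin d) (Fin d) ℂ) (n : ℕ) (μ : ℂ)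
    (hμ : μ ∈ spectrum ℂ U) : μ ^ n ∈ spectrum ℂ (U ^ n) := by
  have h := spectrum.subset_polynomial_aeval U (X ^ n : ℂ[X])
    (Set.mem_image_of_mem _ hμ)
  simpa using h

lemma spectrum_eq_of_isConj' {d : ℕ} (x y : Matrix.unitaryGroup (Fin d) ℂ) (h : IsConj x y) :
    spectrum ℂ (y : Matrix (Fin d) (Fin d) ℂ) = spectrum ℂ (x : Matrix (Fin d) (Fin d) ℂ) := by
  obtain ⟨c, hc⟩ := isConj_iff.mp h
  have h2 : (y : Matrix (Fin d) (Fin d) ℂ)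
      = (c : Matrix (Fin d) (Fin d) ℂ) * (x : Matrix (Fin d) (Fin d) ℂ)
        * ((star c : Matrix.unitaryGroup (Fin d) ℂ) : Matrix (Fin d) (Fin d) ℂ) := by
    rw [← hc, Unitary.star_eq_inv]
    rfl
  rw [h2]
  exact Unitary.spectrum_star_right_conjugate

lemma spec_all_one' {d p : ℕ} [Fact p.Prime] (hd2 : 2 * d < p - 1)
    (U : Matrix (Fin d) (Fin d) ℂ)
    (hpow : ∀ μ ∈ spectrum ℂ U, μ ^ p = 1)
    (hQR : ∀ μ ∈ spectrum ℂ U, ∀ m : ZMod p, m ≠ 0 → IsSquare m →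
      μ ^ m.val ∈ spectrum ℂ U) :
    ∀ μ ∈ spectrum ℂ U, μ = 1 := by
  haveI : NeZero p := ⟨(Fact.out : p.Prime).ne_zero⟩
  intro μ hμ
  by_contra hne
  have hp1 : μ ^ p = 1 := hpow μ hμ
  have hμ0 : μ ≠ 0 := by
    rintro rfl
    rw [zero_pow (Fact.out : p.Prime).ne_zero] at hp1
    exact zero_ne_one hp1
  set μu : ℂˣ := Units.mk0 μ hμ0 with hμu
  have hup : μu ^ p = 1 := Units.ext (by simp [hμu, hp1])
  have hord : orderOf μu = p := orderOf_eq_prime hup (by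
    intro h
    exact hne (by simpa [hμu] using congrArg Units.val h))
  set f : (ZMod p)ˣ → ℂ := fun u => μ ^ ((u : ZMod p) ^ 2).val with hf
  have hfT : ∀ u, f u ∈ U.charpoly.roots.toFinset := by
    intro u
    have hm0 : ((u : ZMod p)) ^ 2 ≠ 0 := pow_ne_zero _ (Units.ne_zero u)
    have hsq : IsSquare (((u : ZMod p)) ^ 2) := ⟨u, sq _⟩
    have h2 := hQR μ hμ _ hm0 hsq
    rw [mem_spectrum_iff_isRoot'] at h2
    rw [Multiset.mem_toFinset, mem_roots (Matrix.charpoly_monic U).ne_zero]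
    exact h2
  have hfib : ∀ u v : (ZMod p)ˣ, f u = f v → v = u ∨ v = -u := by
    intro u v h
    have h' : μu ^ ((u : ZMod p) ^ 2).val = μu ^ ((v : ZMod p) ^ 2).val :=
      Units.ext (by simpa [hμu, hf] using h)
    rw [pow_eq_pow_iff_modEq, hord] at h'
    have hval : ((u : ZMod p) ^ 2).val = ((v : ZMod p) ^ 2).val := by
      rwa [Nat.ModEq, Nat.mod_eq_of_lt (ZMod.val_lt _), Nat.mod_eq_of_lt (ZMod.val_lt _)] at h'
    have hsqeq : ((u : ZMod p)) ^ 2 = ((v : ZMod p)) ^ 2 := ZMod.val_injective p hval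
    have hz : ((v : ZMod p) - u) * ((v : ZMod p) + u) = 0 := by
      linear_combination -hsqeq
    rcases mul_eq_zero.mp hz with h0 | h0
    · exact Or.inl (Units.ext (sub_eq_zero.mp h0))
    · refine Or.inr (Units.ext ?_)
      rw [Units.val_neg]
      exact eq_neg_of_add_eq_zero_left h0
  have hcard2 : (Finset.univ : Finset (ZMod p)ˣ).card ≤ 2 * (Finset.univ.image f).card := by
    apply Finset.card_le_mul_card_image _ 2
    intro b hb
    obtain ⟨u0, -, hu0⟩ := Finset.mem_image.mp hb
    have hsub : Finset.univ.filter (fun x => f x = b) ⊆ {u0, -u0} := by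
      intro v hv
      have hfv : f v = b := (Finset.mem_filter.mp hv).2
      rcases hfib u0 v (by rw [hu0, hfv]) with h | h
      · simp [h]
      · simp [h]
    refine (Finset.card_le_card hsub).trans ?_
    refine (Finset.card_insert_le _ _).trans ?_
    simp
  have himg : Finset.univ.image f ⊆ U.charpoly.roots.toFinset := by
    intro b hb
    obtain ⟨u, -, rfl⟩ := Finset.mem_image.mp hb
    exact hfT u
  have hT : U.charpoly.roots.toFinset.card ≤ d := by
    refine (Multiset.toFinset_card_le _).trans ((Polynomial.card_roots' _).trans ?_)
    rw [Matrix.charpoly_natDegree_eq_dim]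
    simp
  have hfinal : p - 1 ≤ 2 * d := by
    have h3 := hcard2.trans (Nat.mul_le_mul_left 2 ((Finset.card_le_card himg).trans hT))
    rwa [Finset.card_univ, ZMod.card_units] at h3
  omega

lemma eq_one_of_spectrum' {d : ℕ} (hd : 0 < d) (p : ℕ) [Fact p.Prime]
    (U : Matrix (Fin d) (Fin d) ℂ)
    (hUp : U ^ p = 1) (hall : ∀ μ ∈ spectrum ℂ U, μ = 1) : U = 1 := by
  haveI : NeZero d := ⟨hd.ne'⟩
  have hpne : ((p : ℕ) : ℂ) ≠ 0 := Nat.cast_ne_zero.mpr (Fact.out : p.Prime).ne_zero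
  have hint : IsIntegral ℂ U := IsIntegral.of_finite ℂ U
  set q := minpoly ℂ U with hq
  have hmon : q.Monic := minpoly.monic hint
  have hdvdc : q ∣ U.charpoly := Matrix.minpoly_dvd_charpoly U
  have hdvdp : q ∣ (X ^ p - C 1 : ℂ[X]) := minpoly.dvd ℂ U (by simp [hUp])
  have hsep : q.Separable :=
    (Polynomial.separable_X_pow_sub_C (1 : ℂ) hpne one_ne_zero).of_dvd hdvdp
  have hroots : ∀ r : ℂ, q.IsRoot r → r = 1 := by
    intro r hr
    exact hall r ((mem_spectrum_iff_isRoot' U r).mpr (hr.dvd hdvdc))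
  have hdeg : 0 < q.natDegree := minpoly.natDegree_pos hint
  obtain ⟨r, hr⟩ := Complex.exists_root (natDegree_pos_iff_degree_pos.mp hdeg)
  have hr1 : r = 1 := hroots r hr
  subst hr1
  have hXdvd : (X - C 1 : ℂ[X]) ∣ q := dvd_iff_isRoot.mpr hr
  obtain ⟨k, hk⟩ := hXdvd
  have hk0 : k ≠ 0 := by
    rintro rfl
    simp only [mul_zero] at hk
    exact hmon.ne_zero hk
  have hkdeg : k.natDegree = 0 := by
    by_contra hkd
    have hkpos : 0 < k.natDegree := Nat.pos_of_ne_zero hkd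
    obtain ⟨s, hs⟩ := Complex.exists_root (natDegree_pos_iff_degree_pos.mp hkpos)
    have hsq : q.IsRoot s := by
      rw [hk]; simp [hs.eq_zero]
    have hs1 : s = 1 := hroots s hsq
    subst hs1
    obtain ⟨k', hk'⟩ : (X - C 1 : ℂ[X]) ∣ k := dvd_iff_isRoot.mpr hs
    have hdd : (X - C 1 : ℂ[X]) * (X - C 1) ∣ q := by
      rw [hk, hk']
      exact ⟨k', by ring⟩
    exact Polynomial.not_isUnit_X_sub_C (1 : ℂ) (hsep.squarefree _ hdd)
  have hkC : k = C (k.coeff 0) := Polynomial.eq_C_of_natDegree_eq_zero hkdeg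
  have hc1 : k.coeff 0 = 1 := by
    have h4 := hmon.leadingCoeff
    rw [hk, leadingCoeff_mul, hkC, (Polynomial.monic_X_sub_C (1 : ℂ)).leadingCoeff, one_mul,
      Polynomial.leadingCoeff_C] at h4
    exact h4
  have hqeq : q = X - C 1 := by
    rw [hk, hkC, hc1]; simp
  have h5 := minpoly.aeval ℂ U
  rw [← hq, hqeq] at h5
  simp only [map_sub, aeval_X, aeval_C] at h5
  rw [sub_eq_zero] at h5
  simpa using h5

theorem stmt15 (p : ℕ) [Fact p.Prime] (hp : Odd p) :
    (∀ m : ZMod p, m ≠ 0 → IsSquare m → IsConj (upperUni p 1) (upperUni p m)) ∧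
    ∀ (d : ℕ), (d : ℝ) < ((p : ℝ) - 1) / 2 →
      ∀ ρ : Matrix.SpecialLinearGroup (Fin 2) (ZMod p) →* Matrix.unitaryGroup (Fin d) ℂ,
        ρ (upperUni p 1) = 1 := by
  refine ⟨fun m hm hsq => upperUni_isConj p m hm hsq, ?_⟩
  intro d hd ρ
  rcases Nat.eq_zero_or_pos d with rfl | hdpos
  · apply Subtype.ext
    apply Subsingleton.elim
  haveI : NeZero d := ⟨hdpos.ne'⟩
  have hd2 : 2 * d < p - 1 := by
    have hp1 : 1 ≤ p := (Fact.out : p.Prime).one_lt.le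
    have h3 : ((2 * d : ℕ) : ℝ) < ((p - 1 : ℕ) : ℝ) := by
      rw [Nat.cast_sub hp1]
      push_cast
      linarith
    exact_mod_cast h3
  set a := upperUni p 1 with ha2
  set U : Matrix (Fin d) (Fin d) ℂ := ((ρ a : Matrix.unitaryGroup (Fin d) ℂ) :
    Matrix (Fin d) (Fin d) ℂ) with hU
  have hap : a ^ p = 1 := by
    rw [ha2, upperUni_pow]
    simp [upperUni_zero]
  have hρap : (ρ a) ^ p = 1 := by rw [← map_pow, hap, _root_.map_one]
  have hUp : U ^ p = 1 := by
    rw [hU, ← SubmonoidClass.coe_pow, hρap, OneMemClass.coe_one]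
  have hpow : ∀ μ ∈ spectrum ℂ U, μ ^ p = 1 := by
    intro μ hμ
    have h6 := pow_mem_spectrum_pow' U p μ hμ
    rw [hUp] at h6
    rwa [spectrum.one_eq, Set.mem_singleton_iff] at h6
  have hQR : ∀ μ ∈ spectrum ℂ U, ∀ m : ZMod p, m ≠ 0 → IsSquare m →
      μ ^ m.val ∈ spectrum ℂ U := by
    intro μ hμ m hm0 hsq
    have h1 := pow_mem_spectrum_pow' U m.val μ hμ
    have ham : a ^ m.val = upperUni p m := by
      rw [ha2, upperUni_pow]
      congr 1
      simp [ZMod.natCast_val, ZMod.cast_id]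
    have h2 : U ^ m.val = ((ρ (upperUni p m) : Matrix.unitaryGroup (Fin d) ℂ) :
        Matrix (Fin d) (Fin d) ℂ) := by
      rw [hU, ← SubmonoidClass.coe_pow, ← map_pow, ham]
    rw [h2] at h1
    have h3 := spectrum_eq_of_isConj' (ρ a) (ρ (upperUni p m))
      (ρ.map_isConj (upperUni_isConj p m hm0 hsq))
    rwa [h3, ← hU] at h1
  have hall := spec_all_one' hd2 U hpow hQR
  have hU1 : U = 1 := eq_one_of_spectrum' hdpos p U hUp hall
  apply Subtype.ext
  show ((ρ a : Matrix.unitaryGroup (Fin d) ℂ) : Matrix (Fin d) (Fin d) ℂ) = _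
  rw [← hU, hU1, OneMemClass.coe_one]
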